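/- The RK3-Fourier spectral method for the convection equation is stable exactly up to θ² = 3: for θ ∈ ℝ, |1 - iθ - θ²/2 + iθ³/6| ≤ 1 if and only if θ² ≤ 3 (equivalently |θ| ≤ √3). -/

import Mathlib

open Complex

/-- The RK3-Fourier spectral method for the convection equation is stable exactly
up to `θ² = 3`: `|1 - iθ - θ²/2 + iθ³/6| ≤ 1 ↔ θ² ≤ 3`. -/
theorem rk3_convection_stability_iff (θ : ℝ) :
    ‖(1 - (θ : ℂ) * I - (θ : ℂ) ^ 2 / 2 + (θ : ℂ) ^ 3 * I / 6)‖ ≤ 1 ↔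
      θ ^ 2 ≤ 3 := by
  set z : ℂ := 1 - (θ : ℂ) * I - (θ : ℂ) ^ 2 / 2 + (θ : ℂ) ^ 3 * I / 6 with hz
  have e : z = ((1 - θ ^ 2 / 2 : ℝ) : ℂ) + ((θ ^ 3 / 6 - θ : ℝ) : ℂ) * I := by
    rw [hz]; push_cast; ring
  have hns : Complex.normSq z = (1 - θ ^ 2 / 2) ^ 2 + (θ ^ 3 / 6 - θ) ^ 2 := by
    rw [e, Complex.normSq_add_mul_I]
  have habs : ‖z‖ ≤ 1 ↔ Complex.normSq z ≤ 1 := by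
    rw [← Complex.sq_norm]
    constructor
    · intro hle; nlinarith [norm_nonneg z]
    · intro hle; nlinarith [norm_nonneg z]
  rw [habs, hns]
  constructor
  · intro hle; nlinarith [sq_nonneg θ, sq_nonneg (θ ^ 2), sq_nonneg (θ ^ 3)]
  · intro hle; nlinarith [sq_nonneg θ, sq_nonneg (θ ^ 2), sq_nonneg (θ ^ 2 * (θ ^ 2 - 3))]
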